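/- arXiv:1706.09312 — 5 statements merged into one kernel-verified Lean document; each statement's English description precedes it below -/
import Mathlib

section
/- Let θ ∈ (−1, 1) with θ ≠ 0, and let q₀, q₁ ∈ L^∞(ℝ) with ‖q₀q₁‖_∞ < max(‖q₀‖_∞, ‖q₁‖_∞)². On L²(ℝ) ⊕ L²(ℝ) with norm ‖(h₀,h₁)‖_θ² = ‖h₀‖₂² + ‖h₁‖₂² + 2θ·Re⟨h₀,h₁⟩, the operator T(h₀,h₁) = (q₀h₀, q₁h₁) satisfies ‖T‖_op > max(‖q₀‖_∞, ‖q₁‖_∞). -/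
open MeasureTheory
open scoped ENNReal NNReal
set_option maxHeartbeats 2000000

lemma stmt7_core (θ : ℝ) (hθ₁ : -1 < θ) (hθ₂ : θ < 1) (hθ : θ ≠ 0)
    (q₀ q₁ : ℝ → ℂ) (hq₀ : MemLp q₀ ⊤ (volume : Measure ℝ))
    (hq₁ : MemLp q₁ ⊤ (volume : Measure ℝ))
    (hprod : (eLpNorm (q₀ * q₁) ⊤ volume).toReal < (eLpNorm q₀ ⊤ volume).toReal ^ 2) :
    ∃ h : Lp ℂ 2 (volume : Measure ℝ) × Lp ℂ 2 (volume : Measure ℝ),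
      (eLpNorm q₀ ⊤ volume).toReal *
        Real.sqrt (‖h.1‖ ^ 2 + ‖h.2‖ ^ 2 + 2 * θ * (inner ℂ h.1 h.2 : ℂ).re) <
      Real.sqrt (‖(hq₀.smul (r := 2) (Lp.memLp h.1)).toLp ((h.1 : ℝ → ℂ) • q₀)‖ ^ 2 +
        ‖(hq₁.smul (r := 2) (Lp.memLp h.2)).toLp ((h.2 : ℝ → ℂ) • q₁)‖ ^ 2 +
        2 * θ * (inner ℂ ((hq₀.smul (r := 2) (Lp.memLp h.1)).toLp ((h.1 : ℝ → ℂ) • q₀))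
          ((hq₁.smul (r := 2) (Lp.memLp h.2)).toLp ((h.2 : ℝ → ℂ) • q₁)) : ℂ).re) := by
  classical
  set M : ℝ := (eLpNorm q₀ ⊤ volume).toReal with hMdef
  set P : ℝ := (eLpNorm (q₀ * q₁) ⊤ volume).toReal with hPdef
  have hP0 : 0 ≤ P := ENNReal.toReal_nonneg
  have hM0 : 0 < M := by nlinarith [ENNReal.toReal_nonneg (a := eLpNorm q₀ ⊤ volume)]
  have habs : 0 < |θ| := abs_pos.mpr hθ
  set δ : ℝ := M ^ 2 - P with hδdef
  have hδ : 0 < δ := by simp only [hδdef]; linarith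
  set s : ℝ := |θ| * δ / (2 * M ^ 2) with hsdef
  have hs : 0 < s := by positivity
  set ε : ℝ := min M (|θ| * s * δ / (4 * M)) with hεdef
  have hε : 0 < ε := lt_min hM0 (by positivity)
  have hεM : ε ≤ M := min_le_left _ _
  have hεkey : 2 * M * ε ≤ |θ| * s * δ / 2 := by
    have h1 : ε ≤ |θ| * s * δ / (4 * M) := min_le_right _ _
    have h2 : 2 * M * (|θ| * s * δ / (4 * M)) = |θ| * s * δ / 2 := by
      field_simp
      ring
    nlinarith
  have hMs : M ^ 2 * s = |θ| * δ / 2 := by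
    field_simp [hsdef]
    rw [hsdef]; field_simp
  -- the key numeric inequality
  have hnum : M ^ 2 * (1 + s ^ 2 - 2 * |θ| * s) < (M - ε) ^ 2 - 2 * |θ| * s * P := by
    have h1 : M ^ 2 * s ^ 2 = |θ| * δ / 2 * s := by rw [← hMs]; ring
    nlinarith [mul_pos hε hε, mul_pos (mul_pos habs hs) hδ]
  set t : ℝ := if 0 < θ then -s else s with htdef
  have ht2 : t ^ 2 = s ^ 2 := by
    simp only [htdef]
    split <;> ring
  have hθt : θ * t = -(|θ| * s) := by
    simp only [htdef]
    rcases lt_trichotomy θ 0 with h | h | h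
    · rw [if_neg (by linarith), abs_of_neg h]; ring
    · exact absurd h hθ
    · rw [if_pos h, abs_of_pos h]; ring
  -- a measurable representative of q₀
  set q₀' : ℝ → ℂ := hq₀.1.mk q₀ with hq₀'def
  have hmk : q₀ =ᵐ[volume] q₀' := hq₀.1.ae_eq_mk
  have hsm : StronglyMeasurable q₀' := hq₀.1.stronglyMeasurable_mk
  set E : Set ℝ := {x | M - ε < ‖q₀' x‖} with hEdef
  have hEmeas : MeasurableSet E := measurableSet_lt measurable_const hsm.measurable.norm
  have hEpos : 0 < volume E := by
    by_contra hcon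
    push_neg at hcon
    have hE0 : volume E = 0 := le_antisymm hcon zero_le
    have hae : ∀ᵐ x ∂(volume : Measure ℝ), ‖q₀ x‖ ≤ M - ε := by
      have h1 : ∀ᵐ x ∂(volume : Measure ℝ), ‖q₀' x‖ ≤ M - ε := by
        rw [ae_iff]
        convert hE0 using 2
        ext x
        simp [hEdef, not_le]
      filter_upwards [h1, hmk] with x hx hx'
      rw [hx']; exact hx
    have hle : eLpNorm q₀ ⊤ volume ≤ ENNReal.ofReal (M - ε) := by
      rw [eLpNorm_exponent_top]
      exact eLpNormEssSup_le_of_ae_bound hae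
    have : M ≤ M - ε := ENNReal.toReal_le_of_le_ofReal (by linarith) hle
    linarith
  obtain ⟨S, hSmeas, hSE, hSpos, hSfin⟩ :=
    Measure.exists_subset_measure_lt_top hEmeas hEpos
  set μS : ℝ := (volume S).toReal with hμSdef
  have hμS : 0 < μS := ENNReal.toReal_pos hSpos.ne' hSfin.ne
  -- the indicator function
  set f : ℝ → ℂ := S.indicator (fun _ => (1 : ℂ)) with hfdef
  have hfmem : MemLp f 2 (volume : Measure ℝ) :=
    memLp_indicator_const 2 hSmeas 1 (Or.inr hSfin.ne)
  set F : Lp ℂ 2 (volume : Measure ℝ) := hfmem.toLp f with hFdef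
  have hFcoe : (F : ℝ → ℂ) =ᵐ[volume] f := hfmem.coeFn_toLp
  -- helpers for inner products and norms on L2 via integrals
  have key : ∀ (u v : Lp ℂ 2 (volume : Measure ℝ)) (g h : ℝ → ℂ),
      (u : ℝ → ℂ) =ᵐ[volume] g → (v : ℝ → ℂ) =ᵐ[volume] h →
      (inner ℂ u v : ℂ) = ∫ x, (starRingEnd ℂ) (g x) * h x := by
    intro u v g h hg hv
    rw [MeasureTheory.L2.inner_def]
    refine integral_congr_ae ?_
    filter_upwards [hg, hv] with x h1 h2
    rw [RCLike.inner_apply, h1, h2, mul_comm]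
  have keynorm : ∀ (u : Lp ℂ 2 (volume : Measure ℝ)) (g : ℝ → ℂ),
      (u : ℝ → ℂ) =ᵐ[volume] g → ‖u‖ ^ 2 = ∫ x, ‖g x‖ ^ 2 := by
    intro u g hg
    have h1 : ‖u‖ ^ 2 = RCLike.re (inner ℂ u u : ℂ) := norm_sq_eq_re_inner (𝕜 := ℂ) u
    rw [h1, key u u g g hg hg]
    have h2 : ∀ x, (starRingEnd ℂ) (g x) * g x = ((‖g x‖ ^ 2 : ℝ) : ℂ) := by
      intro x
      rw [RCLike.conj_mul (g x)]
      norm_cast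
    simp_rw [h2]
    rw [show (∫ x, ((‖g x‖ ^ 2 : ℝ) : ℂ) ∂(volume : Measure ℝ))
        = ((∫ x, ‖g x‖ ^ 2 ∂(volume : Measure ℝ) : ℝ) : ℂ) from integral_ofReal]
    simp
  have hF2 : ‖F‖ ^ 2 = μS := by
    rw [keynorm F f hFcoe]
    have : ∀ x, ‖f x‖ ^ 2 = S.indicator (fun _ => (1 : ℝ)) x := by
      intro x
      by_cases hx : x ∈ S <;> simp [hfdef, Set.indicator_of_mem, Set.indicator_of_notMem, hx]
    simp_rw [this]
    rw [integral_indicator hSmeas]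
    simp [hμSdef, Measure.real]
  -- the witness
  refine ⟨(F, (t : ℂ) • F), ?_⟩
  dsimp only
  -- identify the coefficient functions of the image
  have hu₀coe : (((hq₀.smul (r := 2) (Lp.memLp F)).toLp ((F : ℝ → ℂ) • q₀)) : ℝ → ℂ)
      =ᵐ[volume] fun x => f x * q₀ x := by
    filter_upwards [MemLp.coeFn_toLp (hq₀.smul (r := 2) (Lp.memLp F)), hFcoe] with x h1 h2
    rw [h1, Pi.smul_apply', h2, smul_eq_mul]
  have hu₁coe : (((hq₁.smul (r := 2) (Lp.memLp ((t : ℂ) • F))).toLp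
        ((((((t : ℂ) • F) : Lp ℂ 2 (volume : Measure ℝ))) : ℝ → ℂ) • q₁)) : ℝ → ℂ)
      =ᵐ[volume] fun x => (t : ℂ) * f x * q₁ x := by
    filter_upwards [MemLp.coeFn_toLp (hq₁.smul (r := 2) (Lp.memLp ((t : ℂ) • F))),
      Lp.coeFn_smul (t : ℂ) F, hFcoe] with x h1 h2 h3
    rw [h1, Pi.smul_apply', h2, Pi.smul_apply, h3, smul_eq_mul, smul_eq_mul, mul_assoc]
  -- MemLp facts about q₀' and q₀*q₁
  have hq₀'mem : MemLp q₀' ⊤ (volume : Measure ℝ) := hq₀.ae_eq hmk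
  have hfinS : IsFiniteMeasure ((volume : Measure ℝ).restrict S) :=
    ⟨by rwa [Measure.restrict_apply_univ]⟩
  have hq₀'L2 : MemLp q₀' 2 ((volume : Measure ℝ).restrict S) :=
    (hq₀'mem.restrict S).mono_exponent le_top
  have hint : IntegrableOn (fun x => ‖q₀' x‖ ^ 2) S (volume : Measure ℝ) :=
    (memLp_two_iff_integrable_sq_norm hq₀'L2.aestronglyMeasurable).mp hq₀'L2
  -- lower bound for ‖u₀‖²
  have hA : (M - ε) ^ 2 * μS ≤
      ‖(hq₀.smul (r := 2) (Lp.memLp F)).toLp ((F : ℝ → ℂ) • q₀)‖ ^ 2 := by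
    rw [keynorm _ _ hu₀coe]
    have e1 : (fun x => ‖f x * q₀ x‖ ^ 2) = S.indicator (fun x => ‖q₀ x‖ ^ 2) := by
      funext x
      by_cases hx : x ∈ S <;>
        simp [hfdef, Set.indicator_of_mem, Set.indicator_of_notMem, hx]
    rw [e1, integral_indicator hSmeas]
    have e2 : ∫ x in S, ‖q₀ x‖ ^ 2 ∂(volume : Measure ℝ)
        = ∫ x in S, ‖q₀' x‖ ^ 2 ∂(volume : Measure ℝ) := by
      refine integral_congr_ae ?_
      filter_upwards [ae_restrict_of_ae hmk] with x hx
      rw [hx]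
    rw [e2]
    exact setIntegral_ge_of_const_le_real hSmeas hSfin.ne
      (fun x hx => by
        have h1 : M - ε < ‖q₀' x‖ := hSE hx
        have h2 : 0 ≤ M - ε := by linarith
        nlinarith [norm_nonneg (q₀' x)])
      hint
  -- the product is essentially bounded
  have hq01 : MemLp (q₀ * q₁) ⊤ (volume : Measure ℝ) := by
    have := hq₁.smul (r := ⊤) hq₀
    rwa [show q₀ • q₁ = q₀ * q₁ from rfl] at this
  have hq01ae : ∀ᵐ x ∂(volume : Measure ℝ), ‖q₀ x * q₁ x‖ ≤ P := by
    filter_upwards [ae_le_eLpNormEssSup (f := q₀ * q₁) (μ := (volume : Measure ℝ))] with x hx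
    have h1 : (‖(q₀ * q₁) x‖₊ : ℝ≥0∞).toReal ≤ (eLpNormEssSup (q₀ * q₁) volume).toReal := by
      refine ENNReal.toReal_mono ?_ hx
      rw [← eLpNorm_exponent_top]
      exact hq01.2.ne
    simpa [hPdef, eLpNorm_exponent_top] using h1
  -- the cross term
  set R : ℂ := ∫ x in S, (starRingEnd ℂ) (q₀ x) * q₁ x ∂(volume : Measure ℝ) with hRdef
  have hcross : (inner ℂ ((hq₀.smul (r := 2) (Lp.memLp F)).toLp ((F : ℝ → ℂ) • q₀))
      ((hq₁.smul (r := 2) (Lp.memLp ((t : ℂ) • F))).toLp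
        ((((((t : ℂ) • F) : Lp ℂ 2 (volume : Measure ℝ))) : ℝ → ℂ) • q₁)) : ℂ) = (t : ℂ) * R := by
    rw [key _ _ _ _ hu₀coe hu₁coe]
    have e1 : (fun x => (starRingEnd ℂ) (f x * q₀ x) * ((t : ℂ) * f x * q₁ x))
        = fun x => (t : ℂ) * S.indicator (fun y => (starRingEnd ℂ) (q₀ y) * q₁ y) x := by
      funext x
      by_cases hx : x ∈ S <;>
        simp [hfdef, Set.indicator_of_mem, Set.indicator_of_notMem, hx] <;> ring
    rw [e1, integral_const_mul, integral_indicator hSmeas, hRdef]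
  have hRnorm : ‖R‖ ≤ P * μS := by
    rw [hRdef]
    refine norm_setIntegral_le_of_norm_le_const_ae hSfin ?_
    filter_upwards [ae_restrict_of_ae hq01ae] with x hx
    calc ‖(starRingEnd ℂ) (q₀ x) * q₁ x‖ = ‖q₀ x * q₁ x‖ := by
          rw [norm_mul, norm_mul, RCLike.norm_conj]
      _ ≤ P := hx
  -- left-hand side pieces
  have habs1 : |θ| < 1 := abs_lt.mpr ⟨hθ₁, hθ₂⟩
  have hFre : (inner ℂ F F : ℂ).re = μS := by
    have h1 : ‖F‖ ^ 2 = RCLike.re (inner ℂ F F : ℂ) := norm_sq_eq_re_inner (𝕜 := ℂ) F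
    rw [hF2] at h1
    simpa using h1.symm
  have hFt : ‖(t : ℂ) • F‖ ^ 2 = s ^ 2 * μS := by
    rw [norm_smul, mul_pow, hF2]
    rw [Complex.norm_real, Real.norm_eq_abs, sq_abs, ht2]
  have hinner12 : (inner ℂ F ((t : ℂ) • F) : ℂ).re = t * μS := by
    rw [inner_smul_right, Complex.mul_re]
    simp [Complex.ofReal_re, Complex.ofReal_im, inner_self_im, hFre]
    left; rw [← Complex.ofReal_pow, Complex.ofReal_re, hF2]
  have hN1 : ‖F‖ ^ 2 + ‖(t : ℂ) • F‖ ^ 2 + 2 * θ * (inner ℂ F ((t : ℂ) • F) : ℂ).re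
      = (1 + s ^ 2 - 2 * (|θ| * s)) * μS := by
    rw [hF2, hFt, hinner12]
    have : 2 * θ * (t * μS) = 2 * (θ * t) * μS := by ring
    rw [this, hθt]
    ring
  -- the main inequality between the squares
  have hRre : ((t : ℂ) * R).re = t * R.re := by
    rw [Complex.mul_re]
    simp
  have hRrebound : |R.re| ≤ P * μS := (Complex.abs_re_le_norm R).trans hRnorm
  have htabs : |t| = s := by
    simp only [htdef]
    split <;> simp [abs_of_pos hs, abs_of_neg, neg_neg, hs, abs_of_pos]
  have hcrossre : -(2 * (|θ| * s) * (P * μS)) ≤ 2 * θ * ((t : ℂ) * R).re := by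
    rw [hRre]
    have h1 : 2 * θ * (t * R.re) = 2 * (θ * t) * R.re := by ring
    rw [h1, hθt]
    have h2 : -(P * μS) ≤ R.re ∧ R.re ≤ P * μS := abs_le.mp hRrebound
    nlinarith [mul_nonneg (abs_nonneg θ) hs.le, h2.1, h2.2]
  -- assemble
  rw [hN1, hcross]
  have hN1nn : 0 ≤ (1 + s ^ 2 - 2 * (|θ| * s)) * μS := by
    have hfac : 0 ≤ 1 + s ^ 2 - 2 * (|θ| * s) := by
      nlinarith [sq_nonneg (1 - s), mul_pos hs (sub_pos.mpr habs1)]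
    exact mul_nonneg hfac hμS.le
  have hstep := mul_lt_mul_of_pos_right hnum hμS
  have hlt : M ^ 2 * ((1 + s ^ 2 - 2 * (|θ| * s)) * μS) <
      ‖(hq₀.smul (r := 2) (Lp.memLp F)).toLp ((F : ℝ → ℂ) • q₀)‖ ^ 2 +
      ‖(hq₁.smul (r := 2) (Lp.memLp ((t : ℂ) • F))).toLp
        ((((((t : ℂ) • F) : Lp ℂ 2 (volume : Measure ℝ))) : ℝ → ℂ) • q₁)‖ ^ 2 +
      2 * θ * ((t : ℂ) * R).re := by
    have hB := sq_nonneg (‖(hq₁.smul (r := 2) (Lp.memLp ((t : ℂ) • F))).toLp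
      ((((((t : ℂ) • F) : Lp ℂ 2 (volume : Measure ℝ))) : ℝ → ℂ) • q₁)‖)
    calc M ^ 2 * ((1 + s ^ 2 - 2 * (|θ| * s)) * μS)
        = M ^ 2 * (1 + s ^ 2 - 2 * |θ| * s) * μS := by ring
      _ < ((M - ε) ^ 2 - 2 * |θ| * s * P) * μS := hstep
      _ = (M - ε) ^ 2 * μS + -(2 * (|θ| * s) * (P * μS)) := by ring
      _ ≤ ‖(hq₀.smul (r := 2) (Lp.memLp F)).toLp ((F : ℝ → ℂ) • q₀)‖ ^ 2 +
          2 * θ * ((t : ℂ) * R).re := add_le_add hA hcrossre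
      _ ≤ _ := by linarith [hB]
  have h1 : M * Real.sqrt ((1 + s ^ 2 - 2 * (|θ| * s)) * μS)
      = Real.sqrt (M ^ 2 * ((1 + s ^ 2 - 2 * (|θ| * s)) * μS)) := by
    rw [Real.sqrt_mul (sq_nonneg M), Real.sqrt_sq hM0.le]
  rw [h1]
  exact Real.sqrt_lt_sqrt (by positivity) hlt

/-- If θ ≠ 0 and ‖q₀q₁‖_∞ < max(‖q₀‖_∞,‖q₁‖_∞)², then the operator T(h₀,h₁) = (q₀h₀, q₁h₁)
on L²(ℝ) ⊕ L²(ℝ) with norm ‖(h₀,h₁)‖_θ has operator norm strictly greater than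
max(‖q₀‖_∞, ‖q₁‖_∞). -/
theorem stmt_7 (θ : ℝ) (hθ₁ : -1 < θ) (hθ₂ : θ < 1) (hθ : θ ≠ 0)
    (q₀ q₁ : ℝ → ℂ) (hq₀ : MemLp q₀ ⊤ (volume : Measure ℝ))
    (hq₁ : MemLp q₁ ⊤ (volume : Measure ℝ))
    (hprod : (eLpNorm (q₀ * q₁) ⊤ volume).toReal <
      (max (eLpNorm q₀ ⊤ volume).toReal (eLpNorm q₁ ⊤ volume).toReal) ^ 2) :
    let Nθ : Lp ℂ 2 (volume : Measure ℝ) × Lp ℂ 2 (volume : Measure ℝ) → ℝ := fun h =>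
      Real.sqrt (‖h.1‖ ^ 2 + ‖h.2‖ ^ 2 + 2 * θ * (inner ℂ h.1 h.2 : ℂ).re)
    let T : Lp ℂ 2 (volume : Measure ℝ) × Lp ℂ 2 (volume : Measure ℝ) →
        Lp ℂ 2 (volume : Measure ℝ) × Lp ℂ 2 (volume : Measure ℝ) := fun h =>
      ((hq₀.smul (r := 2) (Lp.memLp h.1)).toLp ((h.1 : ℝ → ℂ) • q₀),
       (hq₁.smul (r := 2) (Lp.memLp h.2)).toLp ((h.2 : ℝ → ℂ) • q₁))
    ∃ h, (max (eLpNorm q₀ ⊤ volume).toReal (eLpNorm q₁ ⊤ volume).toReal) * Nθ h < Nθ (T h) := by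
  intro Nθ T
  rcases le_total (eLpNorm q₁ ⊤ volume).toReal (eLpNorm q₀ ⊤ volume).toReal with hle | hle
  · rw [max_eq_left hle] at hprod ⊢
    obtain ⟨h, hh⟩ := stmt7_core θ hθ₁ hθ₂ hθ q₀ q₁ hq₀ hq₁ hprod
    exact ⟨h, hh⟩
  · rw [max_eq_right hle] at hprod ⊢
    rw [mul_comm q₀ q₁] at hprod
    obtain ⟨⟨a, b⟩, hh⟩ := stmt7_core θ hθ₁ hθ₂ hθ q₁ q₀ hq₁ hq₀ hprod
    refine ⟨(b, a), ?_⟩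
    have hsymm : ∀ (x y : Lp ℂ 2 (volume : Measure ℝ)), (inner ℂ x y : ℂ).re = (inner ℂ y x : ℂ).re := by
      intro x y
      rw [← inner_conj_symm x y]
      exact Complex.conj_re _
    simp only [Nθ, T] at hh ⊢
    convert hh using 3 <;> (try simp only [hsymm]) <;> ring
end

section
/- Let G be a group, H a subgroup, and π a representation of G on a Hilbert space H_π which is uniformly bounded with constant C ≥ 1, i.e., C^{−1}‖ξ‖ ≤ ‖π(x)ξ‖ ≤ C‖ξ‖ for all x ∈ G and ξ ∈ H_π. Suppose m is a right-invariant mean on the bounded functions on H (i.e., H is amenable). Then ⟨ξ,η⟩_H := m(h ↦ ⟨π(h)ξ, π(h)η⟩) defines an inner product on H_π whose induced norm ‖·‖_H satisfies C^{−1}‖ξ‖ ≤ ‖ξ‖_H ≤ C‖ξ‖, π(h) is an isometry for ‖·‖_H for every h ∈ H, and ‖π(x)ξ‖_H ≤ C‖ξ‖_H for all x ∈ G. -/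
/-- A complex-valued function on a type is bounded. -/
def BoundedFn {H : Type*} (f : H → ℂ) : Prop := ∃ B : ℝ, ∀ h, ‖f h‖ ≤ B

/-- Averaging over an amenable subgroup: the mean of the translated inner products is an
inner product whose norm is equivalent to the original one, for which H acts by isometries
and for which the representation is still bounded by the same constant. -/
theorem stmt_8 {G : Type*} [Group G] (H : Subgroup G)
    {E : Type*} [NormedAddCommGroup E] [InnerProductSpace ℂ E]
    (π : G →* (E →L[ℂ] E)) (C : ℝ) (hC : 1 ≤ C)
    (hub : ∀ (x : G) (ξ : E), C⁻¹ * ‖ξ‖ ≤ ‖π x ξ‖ ∧ ‖π x ξ‖ ≤ C * ‖ξ‖)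
    (m : (H → ℂ) → ℂ)
    (h_add : ∀ f g : H → ℂ, BoundedFn f → BoundedFn g → m (f + g) = m f + m g)
    (h_smul : ∀ (c : ℂ) (f : H → ℂ), BoundedFn f → m (c • f) = c * m f)
    (h_pos : ∀ f : H → ℂ, BoundedFn f → (∀ h, 0 ≤ (f h).re ∧ (f h).im = 0) →
      0 ≤ (m f).re ∧ (m f).im = 0)
    (h_one : m (fun _ => 1) = 1)
    (h_inv : ∀ f : H → ℂ, BoundedFn f → ∀ g : H, m (fun h => f (h * g)) = m f) :
    let ip : E → E → ℂ := fun ξ η => m (fun h => (inner ℂ (π (h : G) ξ) (π (h : G) η) : ℂ))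
    let N : E → ℝ := fun ξ => Real.sqrt (ip ξ ξ).re
    (∀ ξ η : E, ip η ξ = (starRingEnd ℂ) (ip ξ η)) ∧
    (∀ ξ : E, 0 ≤ (ip ξ ξ).re ∧ (ip ξ ξ).im = 0) ∧
    (∀ ξ η ζ : E, ip ξ (η + ζ) = ip ξ η + ip ξ ζ) ∧
    (∀ (c : ℂ) (ξ η : E), ip ξ (c • η) = c * ip ξ η) ∧
    (∀ ξ : E, ip ξ ξ = 0 → ξ = 0) ∧
    (∀ ξ : E, C⁻¹ * ‖ξ‖ ≤ N ξ ∧ N ξ ≤ C * ‖ξ‖) ∧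
    (∀ (h : H) (ξ : E), N (π (h : G) ξ) = N ξ) ∧
    (∀ (x : G) (ξ : E), N (π x ξ) ≤ C * N ξ) := by
  intro ip N
  have hC0 : (0:ℝ) < C := lt_of_lt_of_le one_pos hC
  have hre : ∀ (r : ℝ) (z : ℂ), ((r:ℂ) * z).re = r * z.re := fun r z => by
    simp [Complex.mul_re]
  have him' : ∀ (r : ℝ) (z : ℂ), ((r:ℂ) * z).im = r * z.im := fun r z => by
    simp [Complex.mul_im]
  have hii : ∀ x : E, ((inner ℂ x x : ℂ)).im = 0 := fun x => inner_self_im (𝕜 := ℂ) x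
  have hin : ∀ x : E, ((inner ℂ x x : ℂ)).re = ‖x‖^2 := fun x => inner_self_eq_norm_sq (𝕜 := ℂ) x
  -- basic boundedness facts
  have hb1 : BoundedFn (fun _ : H => (1:ℂ)) := ⟨1, fun h => by simp⟩
  have hbconst : ∀ c : ℂ, BoundedFn (fun _ : H => c) := fun c => ⟨‖c‖, fun h => le_rfl⟩
  have hbadd : ∀ f g : H → ℂ, BoundedFn f → BoundedFn g → BoundedFn (f + g) := by
    rintro f g ⟨Bf, hBf⟩ ⟨Bg, hBg⟩
    exact ⟨Bf + Bg, fun h => le_trans (norm_add_le _ _) (add_le_add (hBf h) (hBg h))⟩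
  have hbsmul : ∀ (c : ℂ) (f : H → ℂ), BoundedFn f → BoundedFn (c • f) := by
    rintro c f ⟨Bf, hBf⟩
    refine ⟨‖c‖ * Bf, fun h => ?_⟩
    simp only [Pi.smul_apply, smul_eq_mul, norm_mul]
    exact mul_le_mul_of_nonneg_left (hBf h) (norm_nonneg c)
  have hbsub : ∀ f g : H → ℂ, BoundedFn f → BoundedFn g → BoundedFn (f - g) := by
    intro f g hf hg
    have := hbadd f ((-1 : ℂ) • g) hf (hbsmul _ _ hg)
    have e : f + (-1 : ℂ) • g = f - g := by funext h; simp; ring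
    rwa [e] at this
  -- the basic family of functions is bounded
  have hbF : ∀ ξ η : E, BoundedFn (fun h : H => (inner ℂ (π (h:G) ξ) (π (h:G) η) : ℂ)) := by
    intro ξ η
    refine ⟨(C * ‖ξ‖) * (C * ‖η‖), fun h => ?_⟩
    calc ‖(inner ℂ (π (h:G) ξ) (π (h:G) η) : ℂ)‖
        = ‖(inner ℂ (π (h:G) ξ) (π (h:G) η) : ℂ)‖ := rfl
      _ ≤ ‖π (h:G) ξ‖ * ‖π (h:G) η‖ := norm_inner_le_norm _ _
      _ ≤ (C * ‖ξ‖) * (C * ‖η‖) :=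
          mul_le_mul (hub _ ξ).2 (hub _ η).2 (norm_nonneg _) (by positivity)
  -- mean of a constant
  have hm_const : ∀ c : ℂ, m (fun _ : H => c) = c := by
    intro c
    have e : (fun _ : H => c) = c • (fun _ : H => (1:ℂ)) := by funext h; simp
    rw [e, h_smul c _ hb1, h_one, mul_one]
  -- mean of real-valued bounded function is real
  have hm_real : ∀ f : H → ℂ, BoundedFn f → (∀ h, (f h).im = 0) → (m f).im = 0 := by
    rintro f hf him
    obtain ⟨B, hB⟩ := hf
    have hg : BoundedFn (f + fun _ : H => (B:ℂ)) := hbadd _ _ ⟨B, hB⟩ (hbconst _)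
    have hpos := h_pos _ hg (fun h => by
      constructor
      · simp only [Pi.add_apply, Complex.add_re, Complex.ofReal_re]
        have h1 : |(f h).re| ≤ B := le_trans (Complex.abs_re_le_norm _) (hB h)
        linarith [abs_le.mp h1]
      · simp [him h])
    have hsum := h_add f (fun _ => (B:ℂ)) ⟨B, hB⟩ (hbconst _)
    rw [hsum, hm_const] at hpos
    have := hpos.2
    simpa using this
  -- monotonicity of the mean on real-valued functions
  have hm_mono : ∀ f g : H → ℂ, BoundedFn f → BoundedFn g →
      (∀ h, (f h).im = 0 ∧ (g h).im = 0 ∧ (f h).re ≤ (g h).re) → (m f).re ≤ (m g).re := by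
    intro f g hf hg hfg
    have hd : BoundedFn (g - f) := hbsub _ _ hg hf
    have hdp := h_pos (g - f) hd (fun h => by
      obtain ⟨h1, h2, h3⟩ := hfg h
      constructor
      · simp only [Pi.sub_apply, Complex.sub_re]; linarith
      · simp [Pi.sub_apply, Complex.sub_im, h1, h2])
    have e : f + (g - f) = g := by funext h; simp
    have := h_add f (g - f) hf hd
    rw [e] at this
    have : (m g).re = (m f).re + (m (g - f)).re := by rw [this]; simp
    linarith [hdp.1]
  -- the mean commutes with conjugation
  have hm_conj : ∀ f : H → ℂ, BoundedFn f →
      m (fun h => (starRingEnd ℂ) (f h)) = (starRingEnd ℂ) (m f) := by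
    intro f hf
    obtain ⟨B, hB⟩ := hf
    set f1 : H → ℂ := fun h => ((f h).re : ℂ) with hf1
    set f2 : H → ℂ := fun h => ((f h).im : ℂ) with hf2
    have hb1' : BoundedFn f1 := ⟨B, fun h => by
      simpa [f1] using le_trans (Complex.abs_re_le_norm (f h)) (hB h)⟩
    have hb2' : BoundedFn f2 := ⟨B, fun h => by
      simpa [f2] using le_trans (Complex.abs_im_le_norm (f h)) (hB h)⟩
    have e1 : f = f1 + Complex.I • f2 := by
      funext h
      simp only [Pi.add_apply, Pi.smul_apply, smul_eq_mul, f1, f2]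
      rw [mul_comm]
      exact (Complex.re_add_im (f h)).symm
    have e2 : (fun h => (starRingEnd ℂ) (f h)) = f1 + (-Complex.I) • f2 := by
      funext h
      simp only [Pi.add_apply, Pi.smul_apply, smul_eq_mul, f1, f2]
      apply Complex.ext <;> simp
    have r1 : (m f1).im = 0 := hm_real f1 hb1' (fun h => by simp [f1])
    have r2 : (m f2).im = 0 := hm_real f2 hb2' (fun h => by simp [f2])
    have v1 : m f = m f1 + Complex.I * m f2 := by
      rw [e1, h_add f1 _ hb1' (hbsmul _ _ hb2'), h_smul _ _ hb2']
    have v2 : m (fun h => (starRingEnd ℂ) (f h)) = m f1 + (-Complex.I) * m f2 := by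
      rw [e2, h_add f1 _ hb1' (hbsmul _ _ hb2'), h_smul _ _ hb2']
    rw [v1, v2]
    apply Complex.ext <;> simp [r1, r2]
  -- claim 2 : positivity (needed early)
  have claim2 : ∀ ξ : E, 0 ≤ (ip ξ ξ).re ∧ (ip ξ ξ).im = 0 := by
    intro ξ
    exact h_pos _ (hbF ξ ξ) (fun h => by
      constructor
      · rw [hin]; positivity
      · exact hii _)
  -- claim 1 : conjugate symmetry
  have claim1 : ∀ ξ η : E, ip η ξ = (starRingEnd ℂ) (ip ξ η) := by
    intro ξ η
    have e : (fun h : H => (inner ℂ (π (h:G) η) (π (h:G) ξ) : ℂ)) =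
        fun h : H => (starRingEnd ℂ) (inner ℂ (π (h:G) ξ) (π (h:G) η) : ℂ) := by
      funext h; rw [inner_conj_symm]
    show m _ = _
    rw [e, hm_conj _ (hbF ξ η)]
  -- claim 3 : additivity
  have claim3 : ∀ ξ η ζ : E, ip ξ (η + ζ) = ip ξ η + ip ξ ζ := by
    intro ξ η ζ
    have e : (fun h : H => (inner ℂ (π (h:G) ξ) (π (h:G) (η + ζ)) : ℂ)) =
        (fun h : H => (inner ℂ (π (h:G) ξ) (π (h:G) η) : ℂ)) +
        (fun h : H => (inner ℂ (π (h:G) ξ) (π (h:G) ζ) : ℂ)) := by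
      funext h; simp [inner_add_right]
    show m _ = _
    rw [e, h_add _ _ (hbF ξ η) (hbF ξ ζ)]
  -- claim 4 : homogeneity
  have claim4 : ∀ (c : ℂ) (ξ η : E), ip ξ (c • η) = c * ip ξ η := by
    intro c ξ η
    have e : (fun h : H => (inner ℂ (π (h:G) ξ) (π (h:G) (c • η)) : ℂ)) =
        c • (fun h : H => (inner ℂ (π (h:G) ξ) (π (h:G) η) : ℂ)) := by
      funext h; simp [inner_smul_right]
    show m _ = _
    rw [e, h_smul _ _ (hbF ξ η)]
  -- quadratic bounds
  have hquad : ∀ ξ : E, (C⁻¹ * ‖ξ‖)^2 ≤ (ip ξ ξ).re ∧ (ip ξ ξ).re ≤ (C * ‖ξ‖)^2 := by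
    intro ξ
    constructor
    · have := hm_mono (fun _ : H => (((C⁻¹ * ‖ξ‖)^2 : ℝ) : ℂ)) _ (hbconst _) (hbF ξ ξ)
        (fun h => by
          refine ⟨Complex.ofReal_im _, hii _, ?_⟩
          show (((C⁻¹ * ‖ξ‖)^2 : ℝ) : ℂ).re ≤ _
          rw [hin, Complex.ofReal_re]
          exact pow_le_pow_left₀ (by positivity) (hub _ ξ).1 2)
      rw [hm_const, Complex.ofReal_re] at this
      exact this
    · have := hm_mono _ (fun _ : H => (((C * ‖ξ‖)^2 : ℝ) : ℂ)) (hbF ξ ξ) (hbconst _)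
        (fun h => by
          refine ⟨hii _, Complex.ofReal_im _, ?_⟩
          show _ ≤ (((C * ‖ξ‖)^2 : ℝ) : ℂ).re
          rw [hin, Complex.ofReal_re]
          exact pow_le_pow_left₀ (norm_nonneg _) (hub _ ξ).2 2)
      rw [hm_const, Complex.ofReal_re] at this
      exact this
  -- claim 6 : norm equivalence
  have claim6 : ∀ ξ : E, C⁻¹ * ‖ξ‖ ≤ N ξ ∧ N ξ ≤ C * ‖ξ‖ := by
    intro ξ
    constructor
    · have h1 := (hquad ξ).1
      calc C⁻¹ * ‖ξ‖ = Real.sqrt ((C⁻¹ * ‖ξ‖)^2) := (Real.sqrt_sq (by positivity)).symm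
        _ ≤ Real.sqrt (ip ξ ξ).re := Real.sqrt_le_sqrt h1
    · have h2 := (hquad ξ).2
      calc Real.sqrt (ip ξ ξ).re ≤ Real.sqrt ((C * ‖ξ‖)^2) := Real.sqrt_le_sqrt h2
        _ = C * ‖ξ‖ := Real.sqrt_sq (by positivity)
  -- claim 5 : definiteness
  have claim5 : ∀ ξ : E, ip ξ ξ = 0 → ξ = 0 := by
    intro ξ hξ
    have h1 := (claim6 ξ).1
    have h2 : N ξ = 0 := by simp [N, hξ]
    rw [h2] at h1
    have : ‖ξ‖ ≤ 0 := by
      by_contra hn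
      push_neg at hn
      have : 0 < C⁻¹ * ‖ξ‖ := by positivity
      linarith
    exact norm_le_zero_iff.mp this
  -- claim 7 : H-invariance
  have claim7 : ∀ (h : H) (ξ : E), N (π (h : G) ξ) = N ξ := by
    intro h ξ
    have key : ip (π (h:G) ξ) (π (h:G) ξ) = ip ξ ξ := by
      have e : (fun g : H => (inner ℂ (π (g:G) (π (h:G) ξ)) (π (g:G) (π (h:G) ξ)) : ℂ)) =
          fun g : H => (fun k : H => (inner ℂ (π (k:G) ξ) (π (k:G) ξ) : ℂ)) (g * h) := by
        funext g
        have : π (g:G) (π (h:G) ξ) = π (((g*h : H) : G)) ξ := by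
          simp [map_mul, ContinuousLinearMap.mul_apply]
        rw [this]
      show m _ = m _
      rw [e, h_inv _ (hbF ξ ξ) h]
    simp only [N, key]
  -- claim 8 : G-bound
  have claim8 : ∀ (x : G) (ξ : E), N (π x ξ) ≤ C * N ξ := by
    intro x ξ
    have key : (ip (π x ξ) (π x ξ)).re ≤ C^2 * (ip ξ ξ).re := by
      have hmono := hm_mono _ (((C^2 : ℝ) : ℂ) • fun h : H => (inner ℂ (π (h:G) ξ) (π (h:G) ξ) : ℂ))
        (hbF (π x ξ) (π x ξ)) (hbsmul _ _ (hbF ξ ξ))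
        (fun h => by
          refine ⟨hii _, ?_, ?_⟩
          · show (((C^2 : ℝ) : ℂ) * _).im = 0
            rw [him', hii, mul_zero]
          · show _ ≤ (((C^2 : ℝ) : ℂ) * _).re
            rw [hre, hin, hin]
            have hcomm : π (h:G) ((π x) ξ) = π ((h:G) * x * (h:G)⁻¹) (π (h:G) ξ) := by
              rw [← ContinuousLinearMap.mul_apply, ← map_mul,
                ← ContinuousLinearMap.mul_apply, ← map_mul]
              group
            calc ‖π (h:G) (π x ξ)‖^2 = ‖π ((h:G) * x * (h:G)⁻¹) (π (h:G) ξ)‖^2 := by rw [hcomm]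
              _ ≤ (C * ‖π (h:G) ξ‖)^2 := pow_le_pow_left₀ (norm_nonneg _) (hub _ _).2 2
              _ = C^2 * ‖π (h:G) ξ‖^2 := by ring)
      rw [h_smul _ _ (hbF ξ ξ)] at hmono
      rw [hre] at hmono
      exact hmono
    calc N (π x ξ) ≤ Real.sqrt (C^2 * (ip ξ ξ).re) := Real.sqrt_le_sqrt key
      _ = C * N ξ := by
        rw [Real.sqrt_mul (by positivity), Real.sqrt_sq (le_of_lt hC0)]
  exact ⟨claim1, claim2, claim3, claim4, claim5, claim6, claim7, claim8⟩
end

section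
/- Let λ ∈ (−1/2, 0) and let f : ℝ² \ {0} → ℂ be continuous with f(δv) = |δ|^{2λ−1} f(v) for all δ ≠ 0 and v ≠ 0, such that the double integral on the right converges absolutely. Then ∫_ℝ∫_ℝ f(1,t) conj(f(1,u)) |t−u|^{−(1+2λ)} dt du = (1/4)∫_{−π}^{π}∫_{−π}^{π} f(cos θ, sin θ) conj(f(cos φ, sin φ)) |csc(θ−φ)|^{1+2λ} dθ dφ. -/
open Real MeasureTheory Set

private lemma tan_subst (g : ℝ → ℂ) :
    ∫ t : ℝ, g t = ∫ θ in Ioo (-(π/2)) (π/2), ((Real.cos θ) ^ 2)⁻¹ • g (Real.tan θ) := by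
  rw [← setIntegral_univ, ← Real.image_tan_Ioo,
    integral_image_eq_integral_abs_deriv_smul measurableSet_Ioo
      (fun x hx => (Real.hasDerivAt_tan (Real.cos_pos_of_mem_Ioo hx).ne').hasDerivWithinAt)
      Real.injOn_tan g]
  refine setIntegral_congr_fun measurableSet_Ioo fun x hx => ?_
  rw [abs_of_nonneg (by positivity), one_div]

private lemma half_period (g : ℝ → ℂ) (hg : ∀ x, g (x + π) = g x)
    (hi : IntegrableOn g (Ioc (-π) π)) :
    ∫ x in Ioc (-π) π, g x = 2 * ∫ x in Ioc (-(π/2)) (π/2), g x := by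
  have pip := Real.pi_pos
  have hint : ∀ a b : ℝ, -π ≤ a → a ≤ π → -π ≤ b → b ≤ π → IntervalIntegrable g volume a b := by
    intro a b ha ha' hb hb'
    rcases le_total a b with h | h
    · rw [intervalIntegrable_iff_integrableOn_Ioc_of_le h]
      exact hi.mono_set (Ioc_subset_Ioc ha hb')
    · exact ((intervalIntegrable_iff_integrableOn_Ioc_of_le h).2
        (hi.mono_set (Ioc_subset_Ioc hb ha'))).symm
  have hgsub : ∀ x, g (x - π) = g x := fun x => by
    rw [← hg (x - π), sub_add_cancel]
  have e1 : (∫ x in (-π)..(0:ℝ), g x) = ∫ x in (0:ℝ)..π, g x := by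
    have : (∫ x in (0:ℝ)..π, g (x + -π)) = ∫ x in ((0:ℝ)+ -π)..(π + -π), g x :=
      intervalIntegral.integral_comp_add_right g (-π)
    simp only [show ∀ x : ℝ, x + -π = x - π from fun x => by ring, hgsub] at this
    rw [this]; congr 1 <;> ring
  have e2 : (∫ x in (π/2)..π, g x) = ∫ x in (-(π/2))..(0:ℝ), g x := by
    have : (∫ x in (-(π/2))..(0:ℝ), g (x + π)) = ∫ x in ((-(π/2))+π)..((0:ℝ)+π), g x :=
      intervalIntegral.integral_comp_add_right g π
    simp only [hg] at this
    rw [this]; congr 1 <;> ring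
  have a1 : (∫ x in (-π)..(0:ℝ), g x) + ∫ x in (0:ℝ)..π, g x = ∫ x in (-π)..π, g x :=
    intervalIntegral.integral_add_adjacent_intervals
      (hint _ _ (by linarith) (by linarith) (by linarith) (by linarith))
      (hint _ _ (by linarith) (by linarith) (by linarith) (by linarith))
  have a2 : (∫ x in (0:ℝ)..(π/2), g x) + ∫ x in (π/2)..π, g x = ∫ x in (0:ℝ)..π, g x :=
    intervalIntegral.integral_add_adjacent_intervals
      (hint _ _ (by linarith) (by linarith) (by linarith) (by linarith))
      (hint _ _ (by linarith) (by linarith) (by linarith) (by linarith))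
  have a3 : (∫ x in (-(π/2))..(0:ℝ), g x) + ∫ x in (0:ℝ)..(π/2), g x
      = ∫ x in (-(π/2))..(π/2), g x :=
    intervalIntegral.integral_add_adjacent_intervals
      (hint _ _ (by linarith) (by linarith) (by linarith) (by linarith))
      (hint _ _ (by linarith) (by linarith) (by linarith) (by linarith))
  have e3 : (∫ x in (0:ℝ)..π, g x) = ∫ x in (-(π/2))..(π/2), g x := by
    rw [← a3, ← a2, e2]; ring
  rw [← intervalIntegral.integral_of_le (by linarith : -π ≤ π),
    ← intervalIntegral.integral_of_le (by linarith : -(π/2) ≤ π/2), ← a1, e1, e3]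
  ring

/-- Passing from the line picture to the circle picture for the complementary series norm. -/
theorem stmt_10 (lam : ℝ) (h1 : -(1/2) < lam) (h2 : lam < 0)
    (f : ℝ × ℝ → ℂ) (hf : ContinuousOn f {v : ℝ × ℝ | v ≠ 0})
    (hom : ∀ δ : ℝ, δ ≠ 0 → ∀ v : ℝ × ℝ, v ≠ 0 →
      f (δ • v) = ((|δ| : ℝ) : ℂ) ^ (2 * (lam : ℂ) - 1) * f v)
    (habs : Integrable
      (fun z : ℝ × ℝ => ‖f (Real.cos z.1, Real.sin z.1)‖ *
        ‖f (Real.cos z.2, Real.sin z.2)‖ *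
        |(Real.sin (z.1 - z.2))⁻¹| ^ (1 + 2 * lam))
      ((volume.restrict (Set.Ioc (-π) π)).prod (volume.restrict (Set.Ioc (-π) π)))) :
    ∫ t : ℝ, ∫ u : ℝ, f (1, t) * (starRingEnd ℂ) (f (1, u)) *
        ((|t - u| ^ (-(1 + 2 * lam)) : ℝ) : ℂ) =
      (1/4 : ℂ) * ∫ θ in Set.Ioc (-π) π, ∫ φ in Set.Ioc (-π) π,
        f (Real.cos θ, Real.sin θ) * (starRingEnd ℂ) (f (Real.cos φ, Real.sin φ)) *
          ((|(Real.sin (θ - φ))⁻¹| ^ (1 + 2 * lam) : ℝ) : ℂ) := by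
  have pip := Real.pi_pos
  have ha0 : (0:ℝ) < 1 + 2 * lam := by linarith
  set F : ℝ × ℝ → ℂ := fun z => f (Real.cos z.1, Real.sin z.1) *
      (starRingEnd ℂ) (f (Real.cos z.2, Real.sin z.2)) *
      ((|(Real.sin (z.1 - z.2))⁻¹| ^ (1 + 2 * lam) : ℝ) : ℂ) with hFdef
  have hvne : ∀ θ : ℝ, ((Real.cos θ, Real.sin θ) : ℝ × ℝ) ≠ 0 := by
    intro θ h
    have h1' : Real.cos θ = 0 := congrArg Prod.fst h
    have h2' : Real.sin θ = 0 := congrArg Prod.snd h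
    have := Real.sin_sq_add_cos_sq θ
    rw [h1', h2'] at this; norm_num at this
  have heven : ∀ v : ℝ × ℝ, v ≠ 0 → f (-v) = f v := by
    intro v hv
    have h := hom (-1) (by norm_num) v hv
    simpa using h
  have hFper1 : ∀ θ φ : ℝ, F (θ + π, φ) = F (θ, φ) := by
    intro θ φ
    simp only [hFdef]
    rw [show θ + π - φ = (θ - φ) + π by ring, Real.sin_add_pi, Real.cos_add_pi,
      Real.sin_add_pi,
      show ((-Real.cos θ, -Real.sin θ) : ℝ × ℝ) = -(Real.cos θ, Real.sin θ) from rfl,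
      heven _ (hvne θ), inv_neg, abs_neg]
  have hFper2 : ∀ θ φ : ℝ, F (θ, φ + π) = F (θ, φ) := by
    intro θ φ
    simp only [hFdef]
    rw [show θ - (φ + π) = (θ - φ) - π by ring, Real.sin_sub_pi, Real.cos_add_pi,
      Real.sin_add_pi,
      show ((-Real.cos φ, -Real.sin φ) : ℝ × ℝ) = -(Real.cos φ, Real.sin φ) from rfl,
      heven _ (hvne φ), inv_neg, abs_neg]
  -- measurability and integrability of F
  have hc1 : Continuous fun θ : ℝ => f (Real.cos θ, Real.sin θ) :=
    hf.comp_continuous (Real.continuous_cos.prodMk Real.continuous_sin) fun θ => hvne θ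
  have hrc : Continuous fun x : ℝ => x ^ (1 + 2 * lam) :=
    continuous_iff_continuousAt.2 fun x =>
      Real.continuousAt_rpow_const x _ (Or.inr ha0.le)
  have hm3 : Measurable fun z : ℝ × ℝ => |(Real.sin (z.1 - z.2))⁻¹| ^ (1 + 2 * lam) :=
    (hrc.comp continuous_abs).measurable.comp
      ((Real.continuous_sin.comp (continuous_fst.sub continuous_snd)).measurable.inv)
  have hFm : Measurable F :=
    ((hc1.comp continuous_fst).measurable.mul
      ((Complex.continuous_conj.comp (hc1.comp continuous_snd)).measurable)).mul
      (Complex.measurable_ofReal.comp hm3)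
  have hFint : Integrable F
      ((volume.restrict (Ioc (-π) π)).prod (volume.restrict (Ioc (-π) π))) := by
    refine habs.mono' hFm.aestronglyMeasurable (Filter.Eventually.of_forall fun z => ?_)
    simp only [hFdef]
    rw [norm_mul, norm_mul, Complex.norm_conj, Complex.norm_real, Real.norm_eq_abs,
      abs_of_nonneg (Real.rpow_nonneg (abs_nonneg _) _)]
  -- the pointwise substitution identity
  have hft : ∀ θ ∈ Ioo (-(π/2)) (π/2), f (1, Real.tan θ)
      = ((Real.cos θ ^ (1 - 2*lam) : ℝ) : ℂ) * f (Real.cos θ, Real.sin θ) := by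
    intro θ hθ
    have hc := Real.cos_pos_of_mem_Ioo hθ
    have h := hom (Real.cos θ)⁻¹ (inv_ne_zero hc.ne') _ (hvne θ)
    have hsm : (Real.cos θ)⁻¹ • ((Real.cos θ, Real.sin θ) : ℝ × ℝ) = (1, Real.tan θ) := by
      rw [Prod.smul_mk, smul_eq_mul, smul_eq_mul, inv_mul_cancel₀ hc.ne',
        Real.tan_eq_sin_div_cos, inv_mul_eq_div]
    rw [hsm] at h
    rw [h, abs_of_pos (inv_pos.2 hc)]
    congr 1
    rw [show (2 * (lam:ℂ) - 1) = ((2*lam - 1 : ℝ) : ℂ) by push_cast; ring,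
      ← Complex.ofReal_cpow (inv_nonneg.2 hc.le)]
    congr 1
    rw [Real.inv_rpow hc.le, ← Real.rpow_neg hc.le]
    congr 1; ring
  have hwt : ∀ θ ∈ Ioo (-(π/2)) (π/2), ∀ φ ∈ Ioo (-(π/2)) (π/2),
      |Real.tan θ - Real.tan φ| ^ (-(1+2*lam))
      = |(Real.sin (θ - φ))⁻¹| ^ (1+2*lam)
        * (Real.cos θ ^ (1+2*lam) * Real.cos φ ^ (1+2*lam)) := by
    intro θ hθ φ hφ
    have hc := Real.cos_pos_of_mem_Ioo hθ
    have hd := Real.cos_pos_of_mem_Ioo hφ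
    have htan : Real.tan θ - Real.tan φ = Real.sin (θ - φ) / (Real.cos θ * Real.cos φ) := by
      rw [Real.tan_eq_sin_div_cos, Real.tan_eq_sin_div_cos, Real.sin_sub]
      field_simp
    rw [htan, abs_div, abs_of_pos (mul_pos hc hd),
      Real.rpow_neg (div_nonneg (abs_nonneg _) (mul_pos hc hd).le),
      Real.div_rpow (abs_nonneg _) (mul_pos hc hd).le,
      Real.mul_rpow hc.le hd.le, abs_inv, Real.inv_rpow (abs_nonneg _), inv_div]
    ring
  have hiden : ∀ θ ∈ Ioo (-(π/2)) (π/2), ∀ φ ∈ Ioo (-(π/2)) (π/2),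
      ((Real.cos θ)^2)⁻¹ • (((Real.cos φ)^2)⁻¹ •
        (f (1, Real.tan θ) * (starRingEnd ℂ) (f (1, Real.tan φ)) *
          ((|Real.tan θ - Real.tan φ| ^ (-(1+2*lam)) : ℝ) : ℂ))) = F (θ, φ) := by
    intro θ hθ φ hφ
    have hc := Real.cos_pos_of_mem_Ioo hθ
    have hd := Real.cos_pos_of_mem_Ioo hφ
    have e1 : Real.cos θ ^ (1-2*lam) * Real.cos θ ^ (1+2*lam) = Real.cos θ ^ 2 := by
      rw [← Real.rpow_add hc, show (1-2*lam)+(1+2*lam) = (2:ℝ) by ring, Real.rpow_two]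
    have e2 : Real.cos φ ^ (1-2*lam) * Real.cos φ ^ (1+2*lam) = Real.cos φ ^ 2 := by
      rw [← Real.rpow_add hd, show (1-2*lam)+(1+2*lam) = (2:ℝ) by ring, Real.rpow_two]
    have hcc : ((Real.cos θ)^2)⁻¹ * ((Real.cos φ)^2)⁻¹ *
        (Real.cos θ ^ (1-2*lam) * Real.cos φ ^ (1-2*lam) *
          (Real.cos θ ^ (1+2*lam) * Real.cos φ ^ (1+2*lam))) = 1 := by
      calc ((Real.cos θ)^2)⁻¹ * ((Real.cos φ)^2)⁻¹ *
          (Real.cos θ ^ (1-2*lam) * Real.cos φ ^ (1-2*lam) *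
            (Real.cos θ ^ (1+2*lam) * Real.cos φ ^ (1+2*lam)))
          = (Real.cos θ ^ 2 * ((Real.cos θ)^2)⁻¹) * (Real.cos φ ^ 2 * ((Real.cos φ)^2)⁻¹) := by
            rw [← e1, ← e2]; ring
        _ = 1 := by
            rw [mul_inv_cancel₀ (pow_ne_zero 2 hc.ne'), mul_inv_cancel₀ (pow_ne_zero 2 hd.ne'),
              one_mul]
    rw [hft θ hθ, hft φ hφ, map_mul, Complex.conj_ofReal, hwt θ hθ φ hφ]
    simp only [hFdef]
    rw [Complex.real_smul, Complex.real_smul]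
    calc (((((Real.cos θ)^2)⁻¹ : ℝ)) : ℂ) * ((((((Real.cos φ)^2)⁻¹ : ℝ)) : ℂ) *
          (((Real.cos θ ^ (1-2*lam) : ℝ) : ℂ) * f (Real.cos θ, Real.sin θ) *
            (((Real.cos φ ^ (1-2*lam) : ℝ) : ℂ) * (starRingEnd ℂ) (f (Real.cos φ, Real.sin φ))) *
            ((|(Real.sin (θ - φ))⁻¹| ^ (1+2*lam)
              * (Real.cos θ ^ (1+2*lam) * Real.cos φ ^ (1+2*lam)) : ℝ) : ℂ)))
        = ((((Real.cos θ)^2)⁻¹ * ((Real.cos φ)^2)⁻¹ *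
            (Real.cos θ ^ (1-2*lam) * Real.cos φ ^ (1-2*lam) *
              (Real.cos θ ^ (1+2*lam) * Real.cos φ ^ (1+2*lam))) : ℝ) : ℂ) *
          (f (Real.cos θ, Real.sin θ) * (starRingEnd ℂ) (f (Real.cos φ, Real.sin φ)) *
            ((|(Real.sin (θ - φ))⁻¹| ^ (1+2*lam) : ℝ) : ℂ)) := by
          push_cast; ring
      _ = f (Real.cos θ, Real.sin θ) * (starRingEnd ℂ) (f (Real.cos φ, Real.sin φ)) *
            ((|(Real.sin (θ - φ))⁻¹| ^ (1+2*lam) : ℝ) : ℂ) := by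
          rw [hcc, Complex.ofReal_one, one_mul]
  -- substitution on the line side
  have hL : (∫ t : ℝ, ∫ u : ℝ, f (1, t) * (starRingEnd ℂ) (f (1, u)) *
        ((|t - u| ^ (-(1 + 2 * lam)) : ℝ) : ℂ))
      = ∫ θ in Ioo (-(π/2)) (π/2), ∫ φ in Ioo (-(π/2)) (π/2), F (θ, φ) := by
    rw [tan_subst (fun t => ∫ u : ℝ, f (1, t) * (starRingEnd ℂ) (f (1, u)) *
      ((|t - u| ^ (-(1 + 2 * lam)) : ℝ) : ℂ))]
    refine setIntegral_congr_fun measurableSet_Ioo fun θ hθ => ?_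
    rw [tan_subst (fun u => f (1, Real.tan θ) * (starRingEnd ℂ) (f (1, u)) *
      ((|Real.tan θ - u| ^ (-(1 + 2 * lam)) : ℝ) : ℂ)), ← integral_smul]
    refine setIntegral_congr_fun measurableSet_Ioo fun φ hφ => ?_
    exact hiden θ hθ φ hφ
  -- splitting on the circle side
  have hJI : Ioc (-(π/2)) (π/2) ⊆ Ioc (-π) π := Ioc_subset_Ioc (by linarith) (by linarith)
  have hsl := hFint.prod_right_ae
  have hq1 : (∫ θ in Ioc (-π) π, ∫ φ in Ioc (-π) π, F (θ, φ))
      = ∫ θ in Ioc (-π) π, (2:ℂ) * ∫ φ in Ioc (-(π/2)) (π/2), F (θ, φ) := by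
    refine integral_congr_ae (hsl.mono fun θ hθ => ?_)
    exact half_period (fun φ => F (θ, φ)) (fun φ => hFper2 θ φ) hθ
  have hψint : Integrable (fun θ => ∫ φ in Ioc (-(π/2)) (π/2), F (θ, φ))
      (volume.restrict (Ioc (-π) π)) := by
    have h3 : Integrable F
        ((volume.restrict (Ioc (-π) π)).prod (volume.restrict (Ioc (-(π/2)) (π/2)))) := by
      rw [Measure.prod_restrict] at hFint ⊢
      exact hFint.mono_measure (Measure.restrict_mono (Set.prod_mono Subset.rfl hJI) le_rfl)
    exact h3.integral_prod_left
  have hq2 : (∫ θ in Ioc (-π) π, ∫ φ in Ioc (-(π/2)) (π/2), F (θ, φ))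
      = 2 * ∫ θ in Ioc (-(π/2)) (π/2), ∫ φ in Ioc (-(π/2)) (π/2), F (θ, φ) :=
    half_period _ (fun θ => by simp only [hFper1]) hψint
  have hrfl : (∫ θ in Ioc (-π) π, ∫ φ in Ioc (-π) π,
      f (Real.cos θ, Real.sin θ) * (starRingEnd ℂ) (f (Real.cos φ, Real.sin φ)) *
        ((|(Real.sin (θ - φ))⁻¹| ^ (1 + 2 * lam) : ℝ) : ℂ))
      = ∫ θ in Ioc (-π) π, ∫ φ in Ioc (-π) π, F (θ, φ) := rfl
  rw [hL, hrfl, hq1, integral_const_mul, hq2]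
  simp only [integral_Ioc_eq_integral_Ioo]
  ring
end

section
/- Let α ∈ ℝ with 0 < |α| < 1/2, and define m₀(u) = √(2π)·2^{α+iu}·Γ(1/4+(α+iu)/2)/Γ(1/4−(α+iu)/2). Then |m₀(u)| → ∞ as u → +∞ when α > 0; in particular |m₀| is not a periodic function of u. -/
open Complex Filter MeasureTheory Real Set Topology

/-- Change of variables `x = exp (-s)` turning the Beta integral into a Fourier-type
integral. -/
lemma beta_change {b β : ℝ} (t : ℝ) :
    Complex.betaIntegral ((b : ℂ) + Complex.I * t) β =
      ∫ s : ℝ, Complex.exp (-(Complex.I * s * t)) *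
        (Set.Ioi (0:ℝ)).indicator
          (fun s => Complex.exp (-(s * b)) * (1 - (Real.exp (-s) : ℂ)) ^ ((β:ℂ) - 1)) s := by
  have himg : Ioo (0:ℝ) 1 = (fun s : ℝ => Real.exp (-s)) '' Ioi 0 := by
    ext x
    constructor
    · rintro ⟨hx0, hx1⟩
      exact ⟨-Real.log x, by simpa using Real.log_neg hx0 hx1, by simp [Real.exp_log hx0]⟩
    · rintro ⟨s, hs, rfl⟩
      exact ⟨Real.exp_pos _, Real.exp_lt_one_iff.mpr (by simpa using (mem_Ioi.mp hs))⟩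
  have hderiv : ∀ s ∈ Ioi (0:ℝ), HasDerivWithinAt (fun s : ℝ => Real.exp (-s))
      (-Real.exp (-s)) (Ioi 0) s := by
    intro s _
    simpa using ((hasDerivAt_neg s).exp).hasDerivWithinAt
  have hinj : InjOn (fun s : ℝ => Real.exp (-s)) (Ioi 0) :=
    fun x _ y _ h => by
      have := Real.exp_injective h; linarith
  rw [Complex.betaIntegral, intervalIntegral.integral_of_le zero_le_one,
    MeasureTheory.integral_Ioc_eq_integral_Ioo, himg,
    integral_image_eq_integral_abs_deriv_smul measurableSet_Ioi hderiv hinj,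
    ← MeasureTheory.integral_indicator measurableSet_Ioi]
  congr 1
  funext s
  by_cases hs : s ∈ Ioi (0:ℝ)
  · rw [Set.indicator_of_mem hs, Set.indicator_of_mem hs]
    have he : ((Real.exp (-s) : ℝ) : ℂ) = Complex.exp (↑(-s)) := by
      rw [Complex.ofReal_exp]
    have hlog : ∀ w : ℂ, ((Real.exp (-s) : ℝ) : ℂ) ^ w = Complex.exp (↑(-s) * w) := by
      intro w
      rw [he, Complex.cpow_def_of_ne_zero (Complex.exp_ne_zero _), Complex.log_exp]
      · simpa using Real.pi_pos
      · simpa using Real.pi_pos.le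
    rw [abs_neg, abs_of_pos (Real.exp_pos _), Complex.real_smul, hlog, he,
      ← mul_assoc, ← Complex.exp_add]
    rw [show Complex.exp (↑(-s) + ↑(-s) * ((b:ℂ) + Complex.I * t - 1)) =
        Complex.exp (-(Complex.I * s * t)) * Complex.exp (-((s:ℂ) * b)) by
      rw [← Complex.exp_add]; congr 1; push_cast; ring]
    ring
  · rw [Set.indicator_of_notMem hs, Set.indicator_of_notMem hs, mul_zero]

/-- Riemann–Lebesgue lemma, in the normalization we need. -/
lemma RL_aux (G : ℝ → ℂ) :
    Tendsto (fun t : ℝ => ∫ s : ℝ, Complex.exp (-(Complex.I * s * t)) * G s)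
      atTop (𝓝 0) := by
  have hle : (atTop : Filter ℝ) ≤ cocompact ℝ := by
    rw [cocompact_eq_atBot_atTop]; exact le_sup_right
  have h1 : Tendsto (fun t : ℝ => t / (2 * π)) atTop (cocompact ℝ) :=
    (tendsto_id.atTop_div_const (by positivity)).mono_right hle
  have h2 := (Real.tendsto_integral_exp_smul_cocompact G).comp h1
  refine h2.congr fun t => ?_
  simp only [Function.comp_apply]
  refine integral_congr_ae (Eventually.of_forall fun s => ?_)
  simp only [Circle.smul_def, Real.fourierChar_apply]
  have h3 : 2 * π * -(s * (t / (2 * π))) = -(s * t) := by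
    field_simp
  rw [h3]
  congr 1
  push_cast
  ring

lemma beta_ne_zero {b β : ℝ} (hb : 0 < b) (hβ : 0 < β) (t : ℝ) :
    Complex.betaIntegral ((b : ℂ) + Complex.I * t) β ≠ 0 := by
  have h1 : 0 < ((b : ℂ) + Complex.I * t).re := by simp [hb]
  have h2 : 0 < ((β : ℂ)).re := by simp [hβ]
  have hg := Complex.Gamma_mul_Gamma_eq_betaIntegral h1 h2
  intro h
  rw [h, mul_zero] at hg
  exact mul_ne_zero (Complex.Gamma_ne_zero_of_re_pos h1)
    (Complex.Gamma_ne_zero_of_re_pos h2) hg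

lemma ratio_eq {b β : ℝ} (hb : 0 < b) (hβ : 0 < β) (t : ℝ) :
    ‖Complex.Gamma ((b : ℂ) + Complex.I * t + β)‖ /
      ‖Complex.Gamma ((b : ℂ) + Complex.I * t)‖ =
    Real.Gamma β / ‖Complex.betaIntegral ((b : ℂ) + Complex.I * t) β‖ := by
  have h1 : 0 < ((b : ℂ) + Complex.I * t).re := by simp [hb]
  have h2 : 0 < ((β : ℂ)).re := by simp [hβ]
  have hg := congrArg norm (Complex.Gamma_mul_Gamma_eq_betaIntegral h1 h2)
  rw [norm_mul, norm_mul] at hg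
  have hG : ‖Complex.Gamma ((β : ℂ))‖ = Real.Gamma β := by
    rw [Complex.Gamma_ofReal, Complex.norm_real, Real.norm_eq_abs,
      abs_of_pos (Real.Gamma_pos_of_pos hβ)]
  rw [hG] at hg
  have hA1 : ‖Complex.Gamma ((b : ℂ) + Complex.I * t)‖ ≠ 0 :=
    norm_ne_zero_iff.mpr (Complex.Gamma_ne_zero_of_re_pos h1)
  have hAB : ‖Complex.betaIntegral ((b : ℂ) + Complex.I * t) β‖ ≠ 0 :=
    norm_ne_zero_iff.mpr (beta_ne_zero hb hβ t)
  field_simp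
  linarith [hg]

/-- Key asymptotic: the ratio `|Γ(b+β+it)| / |Γ(b+it)|` tends to `∞` for `b, β > 0`. -/
lemma ratio_tendsto {b β : ℝ} (hb : 0 < b) (hβ : 0 < β) :
    Tendsto (fun t : ℝ => ‖Complex.Gamma ((b:ℂ) + Complex.I * t + β)‖ /
      ‖Complex.Gamma ((b:ℂ) + Complex.I * t)‖) atTop atTop := by
  have hB : Tendsto (fun t : ℝ => Complex.betaIntegral ((b:ℂ) + Complex.I * t) β)
      atTop (𝓝 0) := by
    simp_rw [beta_change]
    exact RL_aux _
  have habs : Tendsto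
      (fun t : ℝ => ‖Complex.betaIntegral ((b:ℂ) + Complex.I * t) β‖)
      atTop (𝓝[>] 0) := by
    refine tendsto_nhdsWithin_of_tendsto_nhds_of_eventually_within _ ?_ ?_
    · simpa [Function.comp_def] using (continuous_norm.tendsto (0:ℂ)).comp hB
    · exact Eventually.of_forall fun t => norm_pos_iff.mpr (beta_ne_zero hb hβ t)
  have hinv := tendsto_inv_nhdsGT_zero.comp habs
  have h2 := hinv.const_mul_atTop (Real.Gamma_pos_of_pos hβ)
  refine h2.congr fun t => ?_
  rw [ratio_eq hb hβ t, div_eq_mul_inv]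
  rfl

/-- The Mellin multiplier m₀. -/
noncomputable def mZero (α u : ℝ) : ℂ :=
  (Real.sqrt (2 * Real.pi) : ℂ) * (2 : ℂ) ^ ((α : ℂ) + Complex.I * u) *
    Complex.Gamma (1/4 + ((α : ℂ) + Complex.I * u) / 2) /
    Complex.Gamma (1/4 - ((α : ℂ) + Complex.I * u) / 2)

lemma abs_mZero (α u : ℝ) :
    ‖mZero α u‖ = (Real.sqrt (2*π) * (2:ℝ) ^ α) *
      (‖Complex.Gamma (((1/4+α/2 : ℝ) : ℂ) + Complex.I * ((u/2 : ℝ) : ℂ))‖ /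
       ‖Complex.Gamma (((1/4-α/2 : ℝ) : ℂ) + Complex.I * ((u/2 : ℝ) : ℂ))‖) := by
  have e1 : ‖(Real.sqrt (2*π) : ℂ)‖ = Real.sqrt (2*π) := by
    rw [Complex.norm_real, Real.norm_eq_abs, _root_.abs_of_nonneg (Real.sqrt_nonneg _)]
  have e2 : ‖(2:ℂ) ^ ((α:ℂ) + Complex.I * u)‖ = (2:ℝ)^α := by
    rw [show (2:ℂ) = ((2:ℝ):ℂ) by norm_num,
      Complex.norm_cpow_eq_rpow_re_of_pos two_pos]
    norm_num
  have e3 : (1/4 + ((α:ℂ) + Complex.I * u)/2) =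
      ((1/4+α/2 : ℝ) : ℂ) + Complex.I * ((u/2 : ℝ) : ℂ) := by push_cast; ring
  have e4 : (1/4 - ((α:ℂ) + Complex.I * u)/2) =
      (starRingEnd ℂ) (((1/4-α/2 : ℝ) : ℂ) + Complex.I * ((u/2 : ℝ) : ℂ)) := by
    rw [map_add, map_mul, Complex.conj_I, Complex.conj_ofReal, Complex.conj_ofReal]
    push_cast; ring
  rw [mZero, norm_div, norm_mul, norm_mul, e1, e2, e3, e4, Complex.Gamma_conj,
    Complex.norm_conj]
  ring

lemma mZero_ne_zero {α : ℝ} (hαn : -(1/2) < α) (hα2 : α < 1/2) (u : ℝ) :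
    mZero α u ≠ 0 := by
  rw [mZero]
  apply div_ne_zero
  apply mul_ne_zero
  apply mul_ne_zero
  · exact_mod_cast Complex.ofReal_ne_zero.mpr (Real.sqrt_pos.mpr (by positivity)).ne'
  · rw [Complex.cpow_def_of_ne_zero two_ne_zero]
    exact Complex.exp_ne_zero _
  · refine Complex.Gamma_ne_zero_of_re_pos ?_
    simp only [Complex.add_re, Complex.div_re]
    norm_num [Complex.mul_re]
    nlinarith [Real.pi_pos]
  · refine Complex.Gamma_ne_zero_of_re_pos ?_
    simp only [Complex.sub_re, Complex.div_re]
    norm_num [Complex.mul_re]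
    nlinarith [Real.pi_pos]

/-- When α > 0, |m₀(u)| → ∞ as u → +∞; in particular |m₀| is not periodic. -/
theorem stmt_12 (α : ℝ) (h1 : 0 < |α|) (h2 : |α| < 1/2) :
    (0 < α → Filter.Tendsto (fun u : ℝ => ‖mZero α u‖)
      Filter.atTop Filter.atTop) ∧
    (∀ p : ℝ, p ≠ 0 → ¬ Function.Periodic (fun u : ℝ => ‖mZero α u‖) p) := by
  have hα2 : α < 1/2 := (le_abs_self α).trans_lt h2
  have hαn : -(1/2) < α := by
    have := (abs_lt.mp h2).1; linarith
  have hne : α ≠ 0 := by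
    intro h; rw [h] at h1; simp at h1
  have hcomp : Tendsto (fun u : ℝ => u/2) atTop atTop :=
    tendsto_id.atTop_div_const two_pos
  have hc : (0:ℝ) < Real.sqrt (2*π) * (2:ℝ)^α := by positivity
  have htop : 0 < α → Tendsto (fun u : ℝ => ‖mZero α u‖) atTop atTop := by
    intro hα
    have hb : 0 < 1/4 - α/2 := by linarith
    have hr := (ratio_tendsto hb hα).comp hcomp
    have h3 := hr.const_mul_atTop hc
    refine h3.congr fun u => ?_
    simp only [Function.comp_apply]
    rw [abs_mZero,
      show ((1/4+α/2 : ℝ) : ℂ) + Complex.I * ((u/2 : ℝ) : ℂ) =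
        ((1/4-α/2 : ℝ) : ℂ) + Complex.I * ((u/2 : ℝ) : ℂ) + (α : ℂ) by push_cast; ring]
  have hzero : α < 0 → Tendsto (fun u : ℝ => ‖mZero α u‖) atTop (𝓝 0) := by
    intro hα
    have ha : 0 < 1/4 + α/2 := by linarith
    have hβ : 0 < -α := by linarith
    have hr := ((ratio_tendsto ha hβ).comp hcomp).inv_tendsto_atTop
    have h3 := hr.const_mul (Real.sqrt (2*π) * (2:ℝ)^α)
    rw [mul_zero] at h3
    refine h3.congr fun u => ?_
    simp only [Function.comp_apply, Pi.inv_apply]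
    rw [abs_mZero,
      show ((1/4-α/2 : ℝ) : ℂ) + Complex.I * ((u/2 : ℝ) : ℂ) =
        ((1/4+α/2 : ℝ) : ℂ) + Complex.I * ((u/2 : ℝ) : ℂ) + ((-α : ℝ) : ℂ) by
        push_cast; ring,
      ← inv_div, inv_inv]
  refine ⟨htop, ?_⟩
  intro p hp hper
  have hq : Function.Periodic (fun u : ℝ => ‖mZero α u‖) |p| := by
    rcases abs_choice p with h | h
    · rw [h]; exact hper
    · rw [h]; exact hper.neg
  have hq0 : 0 < |p| := abs_pos.mpr hp
  rcases hne.lt_or_gt with hneg | hpos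
  · have h0 := hzero hneg
    have hseq : Tendsto (fun n : ℕ => ((n:ℝ) * |p|)) atTop atTop :=
      tendsto_natCast_atTop_atTop.atTop_mul_const hq0
    have hlim := h0.comp hseq
    have heq : ((fun u : ℝ => ‖mZero α u‖) ∘ fun n : ℕ => (n:ℝ) * |p|) =
        fun _ : ℕ => ‖mZero α 0‖ := funext fun n => hq.nat_mul_eq n
    rw [heq] at hlim
    have h00 : ‖mZero α 0‖ = 0 :=
      tendsto_nhds_unique tendsto_const_nhds hlim
    exact mZero_ne_zero hαn hα2 0 (norm_eq_zero.mp h00)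
  · have h0 := htop hpos
    obtain ⟨M, hM⟩ := eventually_atTop.mp (h0.eventually_gt_atTop (‖mZero α 0‖))
    obtain ⟨n, hn⟩ := exists_nat_ge (M / |p|)
    have hM' : M ≤ (n:ℝ) * |p| := (div_le_iff₀ hq0).mp hn
    have hlt := hM _ hM'
    rw [hq.nat_mul_eq n] at hlt
    exact lt_irrefl _ hlt
end

section
/- Let α, β ∈ ℝ with 0 < α < 1/2, and define t_α(u) = i tan(π(1/4 + (α+iu)/2)). Then for all u ∈ ℝ, |t_α(2β−u)/t_α(u)|² = (1 + 2 sinh(πβ) sinh(π(β−u))/(cosh(πu) + sin(πα))) / (1 + 2 sinh(πβ) sinh(π(β−u))/(cosh(πu) − sin(πα))). In particular, when β > 0, |t_α(2β−u)/t_α(u)| < 1 if u < β, = 1 if u = β, and > 1 if u > β. -/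
open Real

lemma sin_pi_alpha_lt_one (α : ℝ) (h1 : 0 < α) (h2 : α < 1/2) : Real.sin (π * α) < 1 := by
  have hmem : π * α ∈ Set.Ioo (-(π/2)) (π/2) := by
    constructor <;> nlinarith [Real.pi_pos]
  have hcos := Real.cos_pos_of_mem_Ioo hmem
  nlinarith [Real.sin_sq_add_cos_sq (π*α), Real.neg_one_le_sin (π*α)]

lemma sin_pi_alpha_pos (α : ℝ) (h1 : 0 < α) (h2 : α < 1/2) : 0 < Real.sin (π * α) := by
  apply Real.sin_pos_of_pos_of_lt_pi <;> nlinarith [Real.pi_pos]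

lemma abs_t_sq (α u : ℝ) (h1 : 0 < α) (h2 : α < 1/2) :
    ‖Complex.I * Complex.tan ((Real.pi : ℂ) * (1/4 + ((α : ℂ) + Complex.I * u) / 2))‖ ^ 2
      = (Real.cosh (π * u) + Real.sin (π * α)) / (Real.cosh (π * u) - Real.sin (π * α)) := by
  have hx : (Real.pi : ℂ) * (1/4 + ((α : ℂ) + Complex.I * u) / 2)
      = ((π/4 + π*α/2 : ℝ) : ℂ) + ((π*u/2 : ℝ) : ℂ) * Complex.I := by
    push_cast; ring
  rw [hx]
  set x : ℝ := π/4 + π*α/2 with hxdef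
  set y : ℝ := π*u/2 with hydef
  have hsin : Complex.sin ((x:ℂ) + (y:ℂ)*Complex.I)
      = ((Real.sin x * Real.cosh y : ℝ):ℂ) + ((Real.cos x * Real.sinh y : ℝ):ℂ) * Complex.I := by
    rw [Complex.sin_add, Complex.sin_mul_I, Complex.cos_mul_I]
    push_cast [Complex.ofReal_sinh, Complex.ofReal_cosh]
    ring
  have hcos : Complex.cos ((x:ℂ) + (y:ℂ)*Complex.I)
      = ((Real.cos x * Real.cosh y : ℝ):ℂ) + ((-(Real.sin x * Real.sinh y) : ℝ):ℂ) * Complex.I := by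
    rw [Complex.cos_add, Complex.sin_mul_I, Complex.cos_mul_I]
    push_cast [Complex.ofReal_sinh, Complex.ofReal_cosh]
    ring
  have key : ‖Complex.I * Complex.tan ((x:ℂ) + (y:ℂ)*Complex.I)‖ ^ 2
      = ((Real.sin x * Real.cosh y)^2 + (Real.cos x * Real.sinh y)^2)
        / ((Real.cos x * Real.cosh y)^2 + (Real.sin x * Real.sinh y)^2) := by
    rw [norm_mul, Complex.norm_I, one_mul, Complex.tan_eq_sin_div_cos, norm_div, div_pow,
      Complex.sq_norm, Complex.sq_norm, hsin, hcos, Complex.normSq_add_mul_I,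
      Complex.normSq_add_mul_I]
    ring_nf
  rw [key]
  have hcosh2 : Real.cosh (π * u) = Real.cosh y ^ 2 + Real.sinh y ^ 2 := by
    have h : π * u = y + y := by rw [hydef]; ring
    rw [h, Real.cosh_add]; ring
  have hsin2 : Real.sin (π * α) = Real.sin x ^ 2 - Real.cos x ^ 2 := by
    have h2x : Real.cos (x + x) = Real.cos x ^2 - Real.sin x ^2 := by
      rw [Real.cos_add]; ring
    have hxx : x + x = π/2 + π * α := by rw [hxdef]; ring
    rw [hxx] at h2x
    have h3 : Real.cos (π/2 + π*α) = - Real.sin (π*α) := by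
      rw [Real.cos_add, Real.cos_pi_div_two, Real.sin_pi_div_two]; ring
    rw [h3] at h2x; linarith
  have hcx : 0 < Real.cos x := by
    apply Real.cos_pos_of_mem_Ioo
    constructor <;> (rw [hxdef]; nlinarith [Real.pi_pos])
  have hden2 : 0 < Real.cosh (π * u) - Real.sin (π * α) := by
    have := sin_pi_alpha_lt_one α h1 h2
    have := Real.one_le_cosh (π * u)
    linarith
  have hs : Real.sin x ^ 2 + Real.cos x ^ 2 = 1 := Real.sin_sq_add_cos_sq x
  have hc : Real.cosh y ^ 2 - Real.sinh y ^ 2 = 1 := Real.cosh_sq_sub_sinh_sq y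
  rw [hcosh2, hsin2] at hden2 ⊢
  rw [div_eq_div_iff]
  · set sx := Real.sin x; set cx := Real.cos x; set cy := Real.cosh y; set sy := Real.sinh y
    linear_combination (sx^2 - cx^2) * (cy^2 + sy^2) * hc - (sx^2 - cx^2) * (cy^2 + sy^2) * hs
  · positivity
  · linarith

lemma cosh_reflect (β u : ℝ) :
    Real.cosh (π * (2 * β - u))
      = Real.cosh (π * u) + 2 * Real.sinh (π * β) * Real.sinh (π * (β - u)) := by
  have h1 : π * (2 * β - u) = π * β + (π * β - π * u) := by ring
  have h2 : π * (β - u) = π * β - π * u := by ring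
  rw [h1, h2, Real.cosh_add, Real.cosh_sub, Real.sinh_sub]
  linear_combination Real.cosh_sq_sub_sinh_sq (π * β) * Real.cosh (π * u)

/-- For 0 < α < 1/2 and t_α(u) = i·tan(π(1/4+(α+iu)/2)):
|t_α(2β−u)/t_α(u)|² = (1 + 2sinh(πβ)sinh(π(β−u))/(cosh(πu)+sin(πα)))
                    / (1 + 2sinh(πβ)sinh(π(β−u))/(cosh(πu)−sin(πα))),
and for β > 0 the quotient is < 1, = 1, > 1 according as u < β, u = β, u > β. -/
theorem stmt_18 (α β : ℝ) (h1 : 0 < α) (h2 : α < 1/2) :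
    let t : ℝ → ℂ := fun u =>
      Complex.I * Complex.tan ((Real.pi : ℂ) * (1/4 + ((α : ℂ) + Complex.I * u) / 2))
    (∀ u : ℝ, ‖t (2 * β - u) / t u‖ ^ 2 =
        (1 + 2 * Real.sinh (π * β) * Real.sinh (π * (β - u)) /
            (Real.cosh (π * u) + Real.sin (π * α))) /
        (1 + 2 * Real.sinh (π * β) * Real.sinh (π * (β - u)) /
            (Real.cosh (π * u) - Real.sin (π * α)))) ∧
    (0 < β → ∀ u : ℝ,
      (u < β → ‖t (2 * β - u) / t u‖ < 1) ∧
      (u = β → ‖t (2 * β - u) / t u‖ = 1) ∧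
      (β < u → 1 < ‖t (2 * β - u) / t u‖)) := by
  intro t
  have hspos := sin_pi_alpha_pos α h1 h2
  have hslt := sin_pi_alpha_lt_one α h1 h2
  set s := Real.sin (π * α) with hs
  -- basic positivity facts, for every u
  have hCge : ∀ u : ℝ, (1:ℝ) ≤ Real.cosh (π * u) := fun u => Real.one_le_cosh _
  have main : ∀ u : ℝ, ‖t (2 * β - u) / t u‖ ^ 2 =
      (1 + 2 * Real.sinh (π * β) * Real.sinh (π * (β - u)) / (Real.cosh (π * u) + s)) /
      (1 + 2 * Real.sinh (π * β) * Real.sinh (π * (β - u)) / (Real.cosh (π * u) - s)) := by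
    intro u
    have habs : ‖t (2 * β - u) / t u‖ ^ 2
        = ‖t (2 * β - u)‖ ^ 2 / ‖t u‖ ^ 2 := by
      rw [norm_div, div_pow]
    rw [habs, abs_t_sq α (2 * β - u) h1 h2, abs_t_sq α u h1 h2, ← hs]
    set C := Real.cosh (π * u) with hC
    set D := 2 * Real.sinh (π * β) * Real.sinh (π * (β - u)) with hD
    have hC' : Real.cosh (π * (2 * β - u)) = C + D := cosh_reflect β u
    rw [hC']
    have hC1 : (1:ℝ) ≤ C := hCge u
    have hCD1 : (1:ℝ) ≤ C + D := hC' ▸ hCge (2*β - u)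
    have h01 : (0:ℝ) < C + s := by linarith
    have h02 : (0:ℝ) < C - s := by linarith
    have h03 : (0:ℝ) < C + D - s := by linarith
    have h04 : (0:ℝ) < C + D + s := by linarith
    have e1 : 1 + D / (C + s) = (C + D + s) / (C + s) := by field_simp; ring
    have e2 : 1 + D / (C - s) = (C + D - s) / (C - s) := by field_simp; ring
    rw [e1, e2, div_div_div_comm]
  refine ⟨main, fun hβ u => ?_⟩
  have hq0 : 0 ≤ ‖t (2 * β - u) / t u‖ := norm_nonneg _
  set q := ‖t (2 * β - u) / t u‖ with hqdef
  have hm := main u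
  set C := Real.cosh (π * u) with hC
  set D := 2 * Real.sinh (π * β) * Real.sinh (π * (β - u)) with hD
  have hC1 : (1:ℝ) ≤ C := hCge u
  have hCD1 : (1:ℝ) ≤ C + D := by
    have := cosh_reflect β u
    rw [← hC, ← hD] at this
    rw [← this]; exact hCge _
  have h01 : (0:ℝ) < C + s := by linarith
  have h02 : (0:ℝ) < C - s := by linarith
  have hsb : 0 < Real.sinh (π * β) := by
    rw [Real.sinh_pos_iff]; positivity
  refine ⟨fun hu => ?_, fun hu => ?_, fun hu => ?_⟩
  · -- u < β : D > 0
    have hDpos : 0 < D := by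
      rw [hD]
      have : 0 < Real.sinh (π * (β - u)) := by
        rw [Real.sinh_pos_iff]; nlinarith [Real.pi_pos]
      positivity
    have hnum_lt : D / (C + s) < D / (C - s) :=
      div_lt_div_of_pos_left hDpos h02 (by linarith)
    have hden_pos : 0 < 1 + D / (C - s) := by positivity
    have hq2 : q ^ 2 < 1 := by
      rw [hm, div_lt_one hden_pos]; linarith
    nlinarith
  · -- u = β : D = 0
    subst hu
    have hD0 : D = 0 := by
      rw [hD]
      simp [Real.sinh_zero]
    have hq2 : q ^ 2 = 1 := by rw [hm, hD0]; norm_num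
    have : (q - 1) * (q + 1) = 0 := by linear_combination hq2
    rcases mul_eq_zero.1 this with h | h
    · linarith
    · linarith
  · -- β < u : D < 0
    have hDneg : D < 0 := by
      rw [hD]
      have : Real.sinh (π * (β - u)) < 0 := by
        rw [← Real.sinh_zero]
        apply Real.sinh_lt_sinh.2
        nlinarith [Real.pi_pos]
      nlinarith
    have hden_pos : 0 < 1 + D / (C - s) := by
      have e2 : 1 + D / (C - s) = (C + D - s) / (C - s) := by field_simp; ring
      rw [e2]; exact div_pos (by linarith) h02
    have hnum_lt : D / (C - s) < D / (C + s) := by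
      rw [div_lt_div_iff₀ h02 h01]
      nlinarith
    have hq2 : 1 < q ^ 2 := by
      rw [hm, lt_div_iff₀ hden_pos]; linarith
    nlinarith
end
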